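/- Let q, r ≥ 2, 0 < α < 1 and n ≥ 1, with S = S^{(n)} ⊆ DL(q,r) and S₁, S₂, ∂*S₁, ∂*S₂, ∂S₁, ∂S₂, a₁, a₂ as in the context. Then for all x₁x₂ ∈ S: F^{∂S}(x₁x₂, y₁a₂) = F₁^{∂S₁}(x₁, y₁) for every y₁ ∈ ∂*S₁, and F^{∂S}(x₁x₂, a₁y₂) = F₂^{∂S₂}(x₂, y₂) for every y₂ ∈ ∂*S₂; here F^{∂S} refers to the chain P_α on DL(q,r), F₁^{∂S₁} to the chain P₁ on T_q, and F₂^{∂S₂} to the chain P₂ on T_r. -/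
import Mathlib


open scoped Classical

noncomputable section

namespace LampDL

variable {X : Type*}

/-- `n`-step transition probabilities of the Markov chain with transition matrix `p`. -/
def matpow (p : X → X → ℝ) : ℕ → X → X → ℝ
  | 0 => fun x y => if x = y then 1 else 0
  | n + 1 => fun x y => ∑' z, p x z * matpow p n z y

/-- A (countable) stochastic transition matrix. -/
def IsStochastic (p : X → X → ℝ) : Prop :=
  (∀ x y, 0 ≤ p x y) ∧ ∀ x, HasSum (p x) 1

/-- Irreducibility: some power has positive entry for every pair. -/
def IsIrreducible (p : X → X → ℝ) : Prop := ∀ x y, ∃ n, 0 < matpow p n x y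

/-- `hitBefore p A y n x` is the probability that the chain started at `x` avoids `A`
at all times `< n` and is at `y` at time `n`.  For `y ∈ A`, summing over `n` yields
`F^A(x,y) = Pr_x[s^y ≤ s^A, s^y < ∞]`. -/
def hitBefore (p : X → X → ℝ) (A : Set X) (y : X) : ℕ → X → ℝ
  | 0 => fun x => if x = y then 1 else 0
  | n + 1 => fun x => if x ∈ A then 0 else ∑' z, p x z * hitBefore p A y n z

/-- `F^A(x,y) = Pr_x[s^y ≤ s^A, s^y < ∞]` (for `y ∈ A`). -/
def FA (p : X → X → ℝ) (A : Set X) (x y : X) : ℝ := ∑' n, hitBefore p A y n x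

/-- `F(x,y) = Pr_x[s^y < ∞]`, the probability of ever hitting `y` from `x`. -/
def Fhit (p : X → X → ℝ) (x y : X) : ℝ := FA p {y} x y

/-- A function is `P`-harmonic if `∑_y p(x,y) h(y) = h(x)` for every `x`. -/
def IsHarmonic (p : X → X → ℝ) (h : X → ℝ) : Prop := ∀ x, ∑' y, p x y * h y = h x

/-- A minimal harmonic function (w.r.t. the reference point `o`). -/
def IsMinimalHarmonic (p : X → X → ℝ) (o : X) (h : X → ℝ) : Prop :=
  IsHarmonic p h ∧ (∀ x, 0 ≤ h x) ∧ h o = 1 ∧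
    ∀ h₁ : X → ℝ, IsHarmonic p h₁ → (∀ x, 0 ≤ h₁ x) → (∀ x, h₁ x ≤ h x) →
      ∃ c : ℝ, ∀ x, h₁ x = c * h x

/-- Vertices of the homogeneous tree `T_q`, modelled as pairs `(σ, k)` where
`σ : ℤ → ZMod q` is finitely supported with `σ n = 0` for `n > 0`. -/
structure TV (q : ℕ) where
  σ : ℤ → ZMod q
  k : ℤ
  fin : (Function.support σ).Finite
  upz : ∀ n : ℤ, 0 < n → σ n = 0

lemma fin_aux {q : ℕ} (g : ℤ → ZMod q) (hg : (Function.support g).Finite)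
    (f : ℤ → ℤ) (hf : Function.Injective f) :
    (Function.support fun n => if n ≤ 0 then g (f n) else 0).Finite := by
  refine Set.Finite.subset (hg.preimage hf.injOn) ?_
  intro n hn
  simp only [Function.mem_support] at hn
  by_cases hle : n ≤ 0
  · simp only [hle, if_true] at hn
    simpa [Set.mem_preimage, Function.mem_support] using hn
  · simp [hle] at hn

/-- The predecessor `x⁻` of a vertex of `T_q` (w.r.t. the reference end `ω`). -/
def pred {q : ℕ} (x : TV q) : TV q where
  σ := fun n => if n ≤ 0 then x.σ (n - 1) else 0
  k := x.k - 1
  fin := fin_aux x.σ x.fin (fun n => n - 1) sub_left_injective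
  upz := fun n hn => by simp [not_le.mpr hn]

/-- The vertex on the geodesic `ω o` at Busemann level `k` (zero configuration). -/
def rootAt (q : ℕ) (k : ℤ) : TV q := ⟨fun _ => 0, k, by simp, fun _ _ => rfl⟩

/-- The Diestel–Leader graph `DL(q,r)`. -/
def DL (q r : ℕ) := {x : TV q × TV r // x.1.k + x.2.k = 0}

/-- The root `o = o₁o₂` of `DL(q,r)`. -/
def oDL (q r : ℕ) : DL q r := ⟨(rootAt q 0, rootAt r 0), by simp [rootAt]⟩

/-- The projected transition matrix `P₁ = P_{1,α}` on `T_q`. -/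
def p1 (q : ℕ) (α : ℝ) (x y : TV q) : ℝ :=
  if pred y = x then α / (q : ℝ) else if y = pred x then 1 - α else 0

/-- The projected transition matrix `P₂ = P_{2,1-α}` on `T_r`. -/
def p2 (r : ℕ) (α : ℝ) (x y : TV r) : ℝ :=
  if y = pred x then α else if pred y = x then (1 - α) / (r : ℝ) else 0

/-- The transition matrix `P_α` on `DL(q,r)`. -/
def pDL (q r : ℕ) (α : ℝ) (x y : DL q r) : ℝ :=
  if pred y.val.1 = x.val.1 ∧ y.val.2 = pred x.val.2 then α / (q : ℝ)
  else if y.val.1 = pred x.val.1 ∧ pred y.val.2 = x.val.2 then (1 - α) / (r : ℝ)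
  else 0


/-- Ends `ξ ∈ ∂*T_q`: configurations whose support is bounded below. -/
def BoundedBelowSupp (q : ℕ) (ξ : ℤ → ZMod q) : Prop := ∃ N : ℤ, ∀ n < N, ξ n = 0

/-- Configurations whose support is bounded above. -/
def BoundedAboveSupp (q : ℕ) (ξ : ℤ → ZMod q) : Prop := ∃ N : ℤ, ∀ n > N, ξ n = 0

/-- The confluent level `b(x,ξ)` (level of `x ⋏ ξ` w.r.t. `ω`) of a vertex `x ∈ T_q`
and an end `ξ ∈ ∂*T_q`. -/
def bconf (q : ℕ) (x : TV q) (ξ : ℤ → ZMod q) : ℤ :=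
  sInf ({m : ℤ | m ≤ x.k ∧ ξ (m + 1) ≠ x.σ (m + 1 - x.k)} ∪ {x.k})

/-- `F₁⁻ = F₁(x,x⁻) = min {1, (1-α)/α}`. -/
def F1m (α : ℝ) : ℝ := min 1 ((1 - α) / α)
/-- `F₁⁺ = F₁(x⁻,x) = min {1/q, α/((1-α)q)}`. -/
def F1p (q : ℕ) (α : ℝ) : ℝ := min (1 / (q : ℝ)) (α / ((1 - α) * (q : ℝ)))
/-- `F₂⁻ = min {1, α/(1-α)}`. -/
def F2m (α : ℝ) : ℝ := min 1 (α / (1 - α))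
/-- `F₂⁺ = min {1/r, (1-α)/(αr)}`. -/
def F2p (r : ℕ) (α : ℝ) : ℝ := min (1 / (r : ℝ)) ((1 - α) / (α * (r : ℝ)))

/-- The Martin kernel `K₁(·,ξ₁)` on `T_q`, `ξ₁ ∈ ∂*T_q`. -/
def K1 (q : ℕ) (α : ℝ) (x : TV q) (ξ : ℤ → ZMod q) : ℝ :=
  F1m α ^ x.k * (F1m α * F1p q α) ^ (bconf q (rootAt q 0) ξ - bconf q x ξ)

/-- The Martin kernel `K₂(·,ξ₂)` on `T_r`, `ξ₂ ∈ ∂*T_r`. -/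
def K2 (r : ℕ) (α : ℝ) (x : TV r) (ξ : ℤ → ZMod r) : ℝ :=
  F2m α ^ x.k * (F2m α * F2p r α) ^ (bconf r (rootAt r 0) ξ - bconf r x ξ)

/-- The vertex `u_m = (σ_m, m)` on the geodesic from `ω` to the end encoded by `ξ`. -/
def rayVertex (q : ℕ) (ξ : ℤ → ZMod q) (hξ : BoundedBelowSupp q ξ) (m : ℤ) : TV q where
  σ := fun n => if n ≤ 0 then ξ (m + n) else 0
  k := m
  fin := by
    obtain ⟨N, hN⟩ := hξ
    apply Set.Finite.subset (Set.finite_Icc (N - m) 0)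
    intro n hn
    simp only [Function.mem_support] at hn
    by_cases hle : n ≤ 0
    · simp only [hle, if_true] at hn
      have : ¬ (m + n < N) := fun hc => hn (hN _ hc)
      exact Set.mem_Icc.mpr ⟨by omega, hle⟩
    · simp [hle] at hn
  upz := fun n hn => by simp [not_le.mpr hn]

/-- The rooted subtree `S₁ = S₁^{(n)} ⊆ T_q` with root `a₁ = (0,-n)`. -/
def S1 (q : ℕ) (n : ℕ) : Set (TV q) :=
  {x | -(n : ℤ) ≤ x.k ∧ x.k ≤ (n : ℤ) ∧ pred^[(x.k + (n : ℤ)).toNat] x = rootAt q (-(n : ℤ))}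

/-- The set of leaves `∂*S₁` of `S₁^{(n)}`. -/
def S1leaves (q : ℕ) (n : ℕ) : Set (TV q) := {x | x ∈ S1 q n ∧ x.k = (n : ℤ)}

/-- The boundary `∂S₁ = {a₁} ∪ ∂*S₁` of `S₁^{(n)}`. -/
def S1bd (q : ℕ) (n : ℕ) : Set (TV q) := insert (rootAt q (-(n : ℤ))) (S1leaves q n)

/-- The horocyclic product `S = S^{(n)}` of `S₁` and `S₂` inside `DL(q,r)`. -/
def Sdl (q r : ℕ) (n : ℕ) : Set (DL q r) := {x | x.val.1 ∈ S1 q n ∧ x.val.2 ∈ S1 r n}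

/-- The boundary `∂S = (∂*S₁ × {a₂}) ∪ ({a₁} × ∂*S₂)` of `S^{(n)}`. -/
def Sbd (q r : ℕ) (n : ℕ) : Set (DL q r) :=
  {x | (x.val.1 ∈ S1leaves q n ∧ x.val.2 = rootAt r (-(n : ℤ))) ∨
       (x.val.1 = rootAt q (-(n : ℤ)) ∧ x.val.2 ∈ S1leaves r n)}

/-- A leaf `y₁ ∈ ∂*S₁` together with `a₂` gives a vertex `y₁a₂` of `DL(q,r)`. -/
def liftLeaf1 (q r : ℕ) (n : ℕ) (y : TV q) (hy : y ∈ S1leaves q n) : DL q r :=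
  ⟨(y, rootAt r (-(n : ℤ))), by have h2 := hy.2; show y.k + (-(n : ℤ)) = 0; omega⟩

/-- The vertex `a₁y₂` of `DL(q,r)` for a leaf `y₂ ∈ ∂*S₂`. -/
def liftLeaf2 (q r : ℕ) (n : ℕ) (y : TV r) (hy : y ∈ S1leaves r n) : DL q r :=
  ⟨(rootAt q (-(n : ℤ)), y), by have h2 := hy.2; show (-(n : ℤ)) + y.k = 0; omega⟩



/-- Elements of the lamplighter group `Γ = ℤ_q ≀ ℤ`: pairs `(η,k)` with `η`
finitely supported. -/
structure LP (q : ℕ) where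
  η : ℤ → ZMod q
  k : ℤ
  fin : (Function.support η).Finite

/-- The identity element `e = (0,0)` of `ℤ_q ≀ ℤ`. -/
def eLP (q : ℕ) : LP q := ⟨fun _ => 0, 0, by simp⟩

/-- Multiplication in `ℤ_q ≀ ℤ`: `(η,k)(η',k') = (η + η'(· − k), k + k')`. -/
def lmul {q : ℕ} (g h : LP q) : LP q where
  η := fun n => g.η n + h.η (n - g.k)
  k := g.k + h.k
  fin := by
    have hinj : Function.Injective (fun n : ℤ => n - g.k) := sub_left_injective
    apply Set.Finite.subset (Set.Finite.union g.fin (h.fin.preimage hinj.injOn))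
    intro n hn
    simp only [Function.mem_support] at hn
    by_cases h1 : g.η n = 0
    · right
      simp only [Set.mem_preimage, Function.mem_support]
      intro h2
      exact hn (by rw [h1, h2, add_zero])
    · left; exact h1

/-- The configuration `δ_j^ℓ` with value `ℓ` at `j` and `0` elsewhere. -/
def deltaCfg (q : ℕ) (j : ℤ) (ℓ : ZMod q) : ℤ → ZMod q := fun n => if n = j then ℓ else 0

/-- The group element `(δ_j^ℓ, k) ∈ ℤ_q ≀ ℤ`. -/
def deltaLP (q : ℕ) (j : ℤ) (ℓ : ZMod q) (k : ℤ) : LP q :=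
  ⟨deltaCfg q j ℓ, k, by
    apply Set.Finite.subset (Set.finite_singleton j)
    intro n hn
    simp only [Function.mem_support, deltaCfg] at hn
    by_cases h : n = j
    · simpa using h
    · simp [h] at hn⟩


/-- Adjacency in the tree `T_q`: one vertex is the predecessor of the other. -/
def adjT {q : ℕ} (x y : TV q) : Prop := pred x = y ∨ pred y = x

/-- Adjacency in `DL(q,r)`. -/
def adjDL {q r : ℕ} (x y : DL q r) : Prop :=
  adjT x.val.1 y.val.1 ∧ adjT x.val.2 y.val.2

/-- The identification `Φ : ℤ_q ≀ ℤ → DL(q,q)`, `Φ(η,k) = (η_k⁻,k)(η_k⁺,-k)`. -/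
def Phi (q : ℕ) (g : LP q) : DL q q :=
  ⟨(⟨fun n => if n ≤ 0 then g.η (g.k + n) else 0, g.k,
      fin_aux g.η g.fin (fun n => g.k + n) (add_right_injective g.k),
      fun n hn => by simp [not_le.mpr hn]⟩,
    ⟨fun n => if n ≤ 0 then g.η (g.k + 1 - n) else 0, -g.k,
      fin_aux g.η g.fin (fun n => g.k + 1 - n) sub_right_injective,
      fun n hn => by simp [not_le.mpr hn]⟩),
   by show g.k + -g.k = 0; omega⟩

/-- The transition matrix `Q_α` of the switch–walk–switch walk on `DL^s(q,r)`. -/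
def qDL (q r : ℕ) (α : ℝ) (x y : DL q r) : ℝ :=
  if pred (pred y.val.1) = pred x.val.1 ∧ y.val.2 = pred x.val.2 then α / ((q : ℝ) ^ 2)
  else if pred y.val.1 = pred (pred x.val.1) ∧ pred y.val.2 = x.val.2 then
    (1 - α) / ((q : ℝ) * (r : ℝ))
  else 0

/-- The horocyclic product `D'` of `T_q` and `T_r` at level sum `-1`. -/
def DL' (q r : ℕ) := {x : TV q × TV r // x.1.k + x.2.k = -1}

/-- The transition matrix `P'` on `D'` (same rule as `P_α`). -/
def pDL' (q r : ℕ) (α : ℝ) (x y : DL' q r) : ℝ :=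
  if pred y.val.1 = x.val.1 ∧ y.val.2 = pred x.val.2 then α / (q : ℝ)
  else if y.val.1 = pred x.val.1 ∧ pred y.val.2 = x.val.2 then (1 - α) / (r : ℝ)
  else 0

/-- The map `x₁x₂ ↦ x₁⁻x₂` from `DL^s(q,r)` onto `D'`. -/
def toDL' {q r : ℕ} (x : DL q r) : DL' q r :=
  ⟨(pred x.val.1, x.val.2), by
    have h := x.property; show x.val.1.k - 1 + x.val.2.k = -1; omega⟩

/-- Harmonicity for the simple ("walk forward and switch, or switch and walk
backward") lamplighter walk on `ℤ_q ≀ ℤ`, whose law is uniform on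
`{(δ₁^ℓ,1), (δ₀^ℓ,-1) : ℓ ∈ ZMod q}`. -/
def SRWHarmonic (q : ℕ) [NeZero q] (h : LP q → ℝ) : Prop :=
  ∀ g : LP q,
    (∑ ℓ : ZMod q, (h (lmul g (deltaLP q 1 ℓ 1)) + h (lmul g (deltaLP q 0 ℓ (-1)))))
      / (2 * (q : ℝ)) = h g

/-- The step `(δ₀^ℓ + δ₁^m, 1)` of the switch–walk–switch walk. -/
def swsStepP (q : ℕ) (ℓ m : ZMod q) : LP q :=
  ⟨fun n => if n = 0 then ℓ else if n = 1 then m else 0, 1, by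
    apply Set.Finite.subset ((Set.finite_singleton 1).insert (0:ℤ))
    intro n hn
    simp only [Function.mem_support] at hn
    by_cases h0 : n = 0
    · simp [h0]
    · by_cases h1 : n = 1
      · simp [h1]
      · simp [h0, h1] at hn⟩

/-- The step `(δ₀^ℓ + δ_{-1}^m, -1)` of the switch–walk–switch walk. -/
def swsStepM (q : ℕ) (ℓ m : ZMod q) : LP q :=
  ⟨fun n => if n = 0 then ℓ else if n = -1 then m else 0, -1, by
    apply Set.Finite.subset ((Set.finite_singleton (-1:ℤ)).insert (0:ℤ))
    intro n hn
    simp only [Function.mem_support] at hn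
    by_cases h0 : n = 0
    · simp [h0]
    · by_cases h1 : n = (-1 : ℤ)
      · simp [h1]
      · simp [h0, h1] at hn⟩

/-- Harmonicity for the switch–walk–switch lamplighter walk on `ℤ_q ≀ ℤ`, whose law
is uniform on `{(δ₀^ℓ + δ₁^m, 1), (δ₀^ℓ + δ_{-1}^m, -1) : ℓ, m ∈ ZMod q}`. -/
def SWSHarmonic (q : ℕ) [NeZero q] (h : LP q → ℝ) : Prop :=
  ∀ g : LP q,
    (∑ ℓ : ZMod q, ∑ m : ZMod q,
        (h (lmul g (swsStepP q ℓ m)) + h (lmul g (swsStepM q ℓ m))))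
      / (2 * (q : ℝ) ^ 2) = h g

/-- The positive defect `df⁺((η,k),ξ₁)`. -/
def dfPlus (q : ℕ) (g : LP q) (ξ : ℤ → ZMod q) : ℤ :=
  sInf ({n : ℤ | n ≤ g.k ∧ ξ (n + 1) ≠ g.η (n + 1)} ∪ {g.k}) -
    sInf ({m : ℤ | m ≤ 0 ∧ ξ (m + 1) ≠ 0} ∪ {0})

/-- The negative defect `df⁻((η,k),ξ₂)`. -/
def dfMinus (q : ℕ) (g : LP q) (ξ : ℤ → ZMod q) : ℤ :=
  sSup ({m : ℤ | 0 < m ∧ ξ m ≠ 0} ∪ {0}) -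
    sSup ({n : ℤ | g.k < n ∧ ξ n ≠ g.η n} ∪ {g.k})

/-- The defect `df⊕((η,k),ξ₁)` for the switch–walk–switch walk. -/
def dfOPlus (q : ℕ) (g : LP q) (ξ : ℤ → ZMod q) : ℤ :=
  sInf ({n : ℤ | n ≤ g.k ∧ ξ n ≠ g.η n} ∪ {g.k}) -
    sInf ({m : ℤ | m ≤ 0 ∧ ξ m ≠ 0} ∪ {0})

lemma TV.ext' {q : ℕ} {x y : TV q} (h1 : x.σ = y.σ) (h2 : x.k = y.k) : x = y := by
  cases x; cases y; simp_all

@[simp] lemma pred_k {q : ℕ} (x : TV q) : (pred x).k = x.k - 1 := rfl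

/-- The successor of `x` with new digit `ℓ`. -/
def succ {q : ℕ} (x : TV q) (ℓ : ZMod q) : TV q where
  σ := fun n => if n = 0 then ℓ else if n < 0 then x.σ (n + 1) else 0
  k := x.k + 1
  fin := by
    apply Set.Finite.subset
      (Set.Finite.insert 0 (x.fin.preimage (add_left_injective (1:ℤ)).injOn))
    intro n hn
    simp only [Function.mem_support] at hn
    by_cases h0 : n = 0
    · exact Set.mem_insert_iff.mpr (Or.inl h0)
    · by_cases hneg : n < 0
      · refine Set.mem_insert_iff.mpr (Or.inr ?_)
        simp only [Set.mem_preimage, Function.mem_support]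
        intro hz
        exact hn (by simp [h0, hneg, hz])
      · simp [h0, hneg] at hn
  upz := fun n hn => by
    have h0 : ¬ n = 0 := by omega
    have h1 : ¬ n < 0 := by omega
    simp [h0, h1]

@[simp] lemma succ_k {q : ℕ} (x : TV q) (ℓ : ZMod q) : (succ x ℓ).k = x.k + 1 := rfl

@[simp] lemma pred_succ {q : ℕ} (x : TV q) (ℓ : ZMod q) : pred (succ x ℓ) = x := by
  refine TV.ext' (funext fun n => ?_) (by show x.k + 1 - 1 = x.k; omega)
  show (if n ≤ 0 then (succ x ℓ).σ (n - 1) else 0) = x.σ n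
  by_cases hle : n ≤ 0
  · have h0 : ¬ (n - 1 = 0) := by omega
    have h1 : n - 1 < 0 := by omega
    simp only [hle, if_true]
    show (if n - 1 = 0 then ℓ else if n - 1 < 0 then x.σ (n - 1 + 1) else 0) = x.σ n
    rw [if_neg h0, if_pos h1]
    congr 1; omega
  · rw [if_neg hle, (x.upz n (by omega)).symm]

lemma succ_inj {q : ℕ} (x : TV q) {ℓ ℓ' : ZMod q} (h : succ x ℓ = succ x ℓ') : ℓ = ℓ' := by
  have := congrArg (fun z => z.σ 0) h
  simpa [succ] using this

lemma eq_succ_of_pred_eq {q : ℕ} {x y : TV q} (h : pred y = x) : y = succ x (y.σ 0) := by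
  have hk : y.k - 1 = x.k := congrArg TV.k h
  refine TV.ext' (funext fun n => ?_) (by show y.k = x.k + 1; omega)
  show y.σ n = if n = 0 then y.σ 0 else if n < 0 then x.σ (n + 1) else 0
  by_cases h0 : n = 0
  · simp [h0]
  · by_cases hneg : n < 0
    · rw [if_neg h0, if_pos hneg]
      have := congrArg (fun z => z.σ (n + 1)) h
      simp only [pred] at this
      rw [if_pos (by omega : n + 1 ≤ 0)] at this
      rw [← this]
      congr 1; omega
    · rw [if_neg h0, if_neg hneg, y.upz n (by omega)]
lemma tsum_p1_mul {q : ℕ} [NeZero q] (α : ℝ) (x : TV q) (f : TV q → ℝ) :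
    ∑' z, p1 q α x z * f z
      = (∑ ℓ : ZMod q, α / (q : ℝ) * f (succ x ℓ)) + (1 - α) * f (pred x) := by
  have hnotmem : pred x ∉ Finset.univ.image (succ x) := by
    simp only [Finset.mem_image]
    rintro ⟨ℓ, -, h⟩
    have := congrArg TV.k h
    simp at this; omega
  rw [tsum_eq_sum (s := insert (pred x) (Finset.univ.image (succ x)))
    (fun z hz => ?_)]
  · rw [Finset.sum_insert hnotmem,
      Finset.sum_image (fun a _ b _ h => succ_inj x h)]
    have h1 : p1 q α x (pred x) = 1 - α := by
      have : ¬ pred (pred x) = x := by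
        intro h; have := congrArg TV.k h; simp at this; omega
      simp [p1, this]
    have h2 : ∀ ℓ : ZMod q, p1 q α x (succ x ℓ) = α / q := by
      intro ℓ; simp [p1]
    rw [h1]
    rw [Finset.sum_congr rfl (fun ℓ _ => by rw [h2 ℓ])]
    ring
  · simp only [Finset.mem_insert, Finset.mem_image] at hz
    push_neg at hz
    have hz1 : ¬ z = pred x := hz.1
    have hz2 : ¬ pred z = x := by
      intro h
      exact (hz.2 (z.σ 0) (Finset.mem_univ _)) (eq_succ_of_pred_eq h).symm
    simp [p1, hz1, hz2]

lemma tsum_p2_mul {r : ℕ} [NeZero r] (α : ℝ) (x : TV r) (f : TV r → ℝ) :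
    ∑' z, p2 r α x z * f z
      = α * f (pred x) + (∑ m : ZMod r, (1 - α) / (r : ℝ) * f (succ x m)) := by
  have hnotmem : pred x ∉ Finset.univ.image (succ x) := by
    simp only [Finset.mem_image]
    rintro ⟨ℓ, -, h⟩
    have := congrArg TV.k h
    simp at this; omega
  rw [tsum_eq_sum (s := insert (pred x) (Finset.univ.image (succ x)))
    (fun z hz => ?_)]
  · rw [Finset.sum_insert hnotmem,
      Finset.sum_image (fun a _ b _ h => succ_inj x h)]
    have h1 : p2 r α x (pred x) = α := by simp [p2]
    have h2 : ∀ ℓ : ZMod r, p2 r α x (succ x ℓ) = (1 - α) / r := by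
      intro ℓ
      have hne : ¬ succ x ℓ = pred x := by
        intro h; have := congrArg TV.k h; simp at this; omega
      simp [p2, hne]
    rw [h1, Finset.sum_congr rfl (fun ℓ _ => by rw [h2 ℓ])]
  · simp only [Finset.mem_insert, Finset.mem_image] at hz
    push_neg at hz
    have hz1 : ¬ z = pred x := hz.1
    have hz2 : ¬ pred z = x := by
      intro h
      exact (hz.2 (z.σ 0) (Finset.mem_univ _)) (eq_succ_of_pred_eq h).symm
    simp [p2, hz1, hz2]
/-- Move up in the first coordinate (and down in the second). -/
def upDL {q r : ℕ} (x : DL q r) (ℓ : ZMod q) : DL q r :=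
  ⟨(succ x.val.1 ℓ, pred x.val.2), by
    have := x.property
    show (x.val.1.k + 1) + (x.val.2.k - 1) = 0
    omega⟩

/-- Move down in the first coordinate (and up in the second). -/
def downDL {q r : ℕ} (x : DL q r) (m : ZMod r) : DL q r :=
  ⟨(pred x.val.1, succ x.val.2 m), by
    have := x.property
    show (x.val.1.k - 1) + (x.val.2.k + 1) = 0
    omega⟩

lemma tsum_pDL_mul {q r : ℕ} [NeZero q] [NeZero r] (α : ℝ) (x : DL q r) (f : DL q r → ℝ) :
    ∑' z, pDL q r α x z * f z
      = (∑ ℓ : ZMod q, α / (q : ℝ) * f (upDL x ℓ))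
        + (∑ m : ZMod r, (1 - α) / (r : ℝ) * f (downDL x m)) := by
  have hdisj : Disjoint (Finset.univ.image (upDL x)) (Finset.univ.image (downDL x)) := by
    rw [Finset.disjoint_left]
    intro z hz1 hz2
    simp only [Finset.mem_image] at hz1 hz2
    obtain ⟨ℓ, -, h1⟩ := hz1
    obtain ⟨m, -, h2⟩ := hz2
    have := congrArg (fun w => w.val.1.k) (h1.trans h2.symm)
    simp [upDL, downDL] at this
    omega
  rw [tsum_eq_sum (s := (Finset.univ.image (upDL x)) ∪ (Finset.univ.image (downDL x)))
    (fun z hz => ?_)]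
  · rw [Finset.sum_union hdisj,
      Finset.sum_image (fun a _ b _ h => ?_), Finset.sum_image (fun a _ b _ h => ?_)]
    · congr 1
      · refine Finset.sum_congr rfl fun ℓ _ => ?_
        have : pDL q r α x (upDL x ℓ) = α / q := by
          simp [pDL, upDL]
        rw [this]
      · refine Finset.sum_congr rfl fun m _ => ?_
        have : pDL q r α x (downDL x m) = (1 - α) / r := by
          have hne : ¬ pred (pred x.val.1) = x.val.1 := by
            intro h; have := congrArg TV.k h; simp at this; omega
          simp [pDL, downDL, hne]
        rw [this]
    · have := congrArg (fun w => w.val.1) h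
      simp only [downDL] at this
      exact succ_inj _ (congrArg (fun w => w.val.2) h)
    · exact succ_inj _ (congrArg (fun w => w.val.1) h)
  · simp only [Finset.mem_union, Finset.mem_image] at hz
    push_neg at hz
    have h1 : ¬ (pred z.val.1 = x.val.1 ∧ z.val.2 = pred x.val.2) := by
      rintro ⟨ha, hb⟩
      refine hz.1 (z.val.1.σ 0) (Finset.mem_univ _) ?_
      refine Subtype.ext (Prod.ext ?_ ?_)
      · exact (eq_succ_of_pred_eq ha).symm
      · exact hb.symm
    have h2 : ¬ (z.val.1 = pred x.val.1 ∧ pred z.val.2 = x.val.2) := by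
      rintro ⟨ha, hb⟩
      refine hz.2 (z.val.2.σ 0) (Finset.mem_univ _) ?_
      exact Subtype.ext (Prod.ext ha.symm (eq_succ_of_pred_eq hb).symm)
    simp [pDL, h1, h2]
lemma S1_eq_root {q : ℕ} {n : ℕ} {x : TV q} (hx : x ∈ S1 q n) (hk : x.k = -(n : ℤ)) :
    x = rootAt q (-(n : ℤ)) := by
  have h3 := hx.2.2
  have h0 : (x.k + (n : ℤ)).toNat = 0 := by omega
  rwa [h0, Function.iterate_zero_apply] at h3

lemma succ_mem_S1 {q : ℕ} {n : ℕ} {x : TV q} (hx : x ∈ S1 q n) (hk : x.k < (n : ℤ))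
    (ℓ : ZMod q) : succ x ℓ ∈ S1 q n := by
  obtain ⟨h1, h2, h3⟩ := hx
  refine ⟨by simp; omega, by simp; omega, ?_⟩
  have ht : ((succ x ℓ).k + (n : ℤ)).toNat = (x.k + (n : ℤ)).toNat + 1 := by
    simp; omega
  rw [ht, Function.iterate_succ_apply, pred_succ]
  exact h3

lemma pred_mem_S1 {q : ℕ} {n : ℕ} {x : TV q} (hx : x ∈ S1 q n) (hk : -(n : ℤ) < x.k) :
    pred x ∈ S1 q n := by
  obtain ⟨h1, h2, h3⟩ := hx
  refine ⟨by simp; omega, by simp; omega, ?_⟩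
  have ht : (x.k + (n : ℤ)).toNat = ((pred x).k + (n : ℤ)).toNat + 1 := by
    simp; omega
  rw [ht, Function.iterate_succ_apply] at h3
  exact h3

lemma mem_Sbd_iff_fst {q r : ℕ} {n : ℕ} {x : DL q r} (hx : x ∈ Sdl q r n) :
    x ∈ Sbd q r n ↔ x.val.1 ∈ S1bd q n := by
  have hsum := x.property
  constructor
  · rintro (⟨h1, -⟩ | ⟨h1, -⟩)
    · exact Set.mem_insert_iff.mpr (Or.inr h1)
    · exact Set.mem_insert_iff.mpr (Or.inl h1)
  · rintro (h1 | h1)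
    · refine Or.inr ⟨h1, ?_⟩
      have hk1 : x.val.1.k = -(n : ℤ) := by
        rw [h1]; rfl
      exact ⟨hx.2, by omega⟩
    · refine Or.inl ⟨h1, ?_⟩
      have hk1 : x.val.1.k = (n : ℤ) := h1.2
      exact S1_eq_root hx.2 (by omega)

lemma mem_Sbd_iff_snd {q r : ℕ} {n : ℕ} {x : DL q r} (hx : x ∈ Sdl q r n) :
    x ∈ Sbd q r n ↔ x.val.2 ∈ S1bd r n := by
  have hsum := x.property
  constructor
  · rintro (⟨-, h2⟩ | ⟨-, h2⟩)
    · exact Set.mem_insert_iff.mpr (Or.inl h2)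
    · exact Set.mem_insert_iff.mpr (Or.inr h2)
  · rintro (h2 | h2)
    · refine Or.inl ⟨?_, h2⟩
      have hk2 : x.val.2.k = -(n : ℤ) := by rw [h2]; rfl
      exact ⟨hx.1, by omega⟩
    · refine Or.inr ⟨?_, h2⟩
      have hk2 : x.val.2.k = (n : ℤ) := h2.2
      exact S1_eq_root hx.1 (by omega)
lemma key1 {q r : ℕ} [NeZero q] [NeZero r] {α : ℝ} {n : ℕ}
    {y : DL q r} (hy1 : y.val.1 ∈ S1leaves q n) (hy2 : y.val.2 = rootAt r (-(n : ℤ)))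
    (m : ℕ) :
    ∀ x : DL q r, x ∈ Sdl q r n →
      hitBefore (pDL q r α) (Sbd q r n) y m x
        = hitBefore (p1 q α) (S1bd q n) y.val.1 m x.val.1 := by
  induction m with
  | zero =>
    intro x hx
    show (if x = y then (1:ℝ) else 0) = if x.val.1 = y.val.1 then 1 else 0
    refine if_congr ⟨fun h => by rw [h], fun h => ?_⟩ rfl rfl
    have hk1 : x.val.1.k = (n : ℤ) := by rw [h]; exact hy1.2
    have hx2 : x.val.2 = rootAt r (-(n : ℤ)) :=
      S1_eq_root hx.2 (by have := x.property; omega)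
    exact Subtype.ext (Prod.ext h (hx2.trans hy2.symm))
  | succ m ih =>
    intro x hx
    show (if x ∈ Sbd q r n then (0:ℝ) else _) = (if x.val.1 ∈ S1bd q n then (0:ℝ) else _)
    by_cases hb : x ∈ Sbd q r n
    · rw [if_pos hb, if_pos ((mem_Sbd_iff_fst hx).mp hb)]
    · have hb1 : x.val.1 ∉ S1bd q n := fun h => hb ((mem_Sbd_iff_fst hx).mpr h)
      rw [if_neg hb, if_neg hb1]
      -- bounds
      have hbound : -(n : ℤ) < x.val.1.k ∧ x.val.1.k < (n : ℤ) := by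
        obtain ⟨h1, h2, -⟩ := hx.1
        rcases eq_or_lt_of_le h1 with he | hlt
        · exact absurd (Set.mem_insert_iff.mpr (Or.inl (S1_eq_root hx.1 he.symm))) hb1
        rcases eq_or_lt_of_le h2 with he | hlt2
        · exact absurd (Set.mem_insert_iff.mpr (Or.inr (show x.val.1 ∈ S1leaves q n from ⟨hx.1, he⟩))) hb1
        exact ⟨hlt, hlt2⟩
      have hsum := x.property
      have hup : ∀ ℓ : ZMod q, upDL x ℓ ∈ Sdl q r n := fun ℓ =>
        ⟨succ_mem_S1 hx.1 hbound.2 ℓ, pred_mem_S1 hx.2 (by omega)⟩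
      have hdown : ∀ m' : ZMod r, downDL x m' ∈ Sdl q r n := fun m' =>
        ⟨pred_mem_S1 hx.1 hbound.1, succ_mem_S1 hx.2 (by omega) m'⟩
      rw [tsum_pDL_mul, tsum_p1_mul]
      have e1 : ∀ ℓ : ZMod q,
          hitBefore (pDL q r α) (Sbd q r n) y m (upDL x ℓ)
            = hitBefore (p1 q α) (S1bd q n) y.val.1 m (succ x.val.1 ℓ) :=
        fun ℓ => ih (upDL x ℓ) (hup ℓ)
      have e2 : ∀ m' : ZMod r,
          hitBefore (pDL q r α) (Sbd q r n) y m (downDL x m')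
            = hitBefore (p1 q α) (S1bd q n) y.val.1 m (pred x.val.1) :=
        fun m' => ih (downDL x m') (hdown m')
      simp only [e1, e2]
      rw [Finset.sum_const, Finset.card_univ, ZMod.card, nsmul_eq_mul]
      have hr0 : (r : ℝ) ≠ 0 := Nat.cast_ne_zero.mpr (NeZero.ne r)
      congr 1
      field_simp

lemma key2 {q r : ℕ} [NeZero q] [NeZero r] {α : ℝ} {n : ℕ}
    {y : DL q r} (hy1 : y.val.1 = rootAt q (-(n : ℤ))) (hy2 : y.val.2 ∈ S1leaves r n)
    (m : ℕ) :
    ∀ x : DL q r, x ∈ Sdl q r n →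
      hitBefore (pDL q r α) (Sbd q r n) y m x
        = hitBefore (p2 r α) (S1bd r n) y.val.2 m x.val.2 := by
  induction m with
  | zero =>
    intro x hx
    show (if x = y then (1:ℝ) else 0) = if x.val.2 = y.val.2 then 1 else 0
    refine if_congr ⟨fun h => by rw [h], fun h => ?_⟩ rfl rfl
    have hk2 : x.val.2.k = (n : ℤ) := by rw [h]; exact hy2.2
    have hx1 : x.val.1 = rootAt q (-(n : ℤ)) :=
      S1_eq_root hx.1 (by have := x.property; omega)
    exact Subtype.ext (Prod.ext (hx1.trans hy1.symm) h)
  | succ m ih =>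
    intro x hx
    show (if x ∈ Sbd q r n then (0:ℝ) else _) = (if x.val.2 ∈ S1bd r n then (0:ℝ) else _)
    by_cases hb : x ∈ Sbd q r n
    · rw [if_pos hb, if_pos ((mem_Sbd_iff_snd hx).mp hb)]
    · have hb2 : x.val.2 ∉ S1bd r n := fun h => hb ((mem_Sbd_iff_snd hx).mpr h)
      rw [if_neg hb, if_neg hb2]
      have hbound : -(n : ℤ) < x.val.2.k ∧ x.val.2.k < (n : ℤ) := by
        obtain ⟨h1, h2, -⟩ := hx.2
        rcases eq_or_lt_of_le h1 with he | hlt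
        · exact absurd (Set.mem_insert_iff.mpr (Or.inl (S1_eq_root hx.2 he.symm))) hb2
        rcases eq_or_lt_of_le h2 with he | hlt2
        · exact absurd (Set.mem_insert_iff.mpr (Or.inr (show x.val.2 ∈ S1leaves r n from ⟨hx.2, he⟩))) hb2
        exact ⟨hlt, hlt2⟩
      have hsum := x.property
      have hup : ∀ ℓ : ZMod q, upDL x ℓ ∈ Sdl q r n := fun ℓ =>
        ⟨succ_mem_S1 hx.1 (by omega) ℓ, pred_mem_S1 hx.2 hbound.1⟩
      have hdown : ∀ m' : ZMod r, downDL x m' ∈ Sdl q r n := fun m' =>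
        ⟨pred_mem_S1 hx.1 (by omega), succ_mem_S1 hx.2 hbound.2 m'⟩
      rw [tsum_pDL_mul, tsum_p2_mul]
      have e1 : ∀ ℓ : ZMod q,
          hitBefore (pDL q r α) (Sbd q r n) y m (upDL x ℓ)
            = hitBefore (p2 r α) (S1bd r n) y.val.2 m (pred x.val.2) :=
        fun ℓ => ih (upDL x ℓ) (hup ℓ)
      have e2 : ∀ m' : ZMod r,
          hitBefore (pDL q r α) (Sbd q r n) y m (downDL x m')
            = hitBefore (p2 r α) (S1bd r n) y.val.2 m (succ x.val.2 m') :=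
        fun m' => ih (downDL x m') (hdown m')
      simp only [e1, e2]
      rw [Finset.sum_const, Finset.card_univ, ZMod.card, nsmul_eq_mul]
      have hq0 : (q : ℝ) ≠ 0 := Nat.cast_ne_zero.mpr (NeZero.ne q)
      congr 1
      field_simp
/-- hitting probabilities on `S^{(n)}` coincide with the projected
hitting probabilities on the two subtrees. -/
theorem hitting_identification (q r : ℕ) (hq : 2 ≤ q) (hr : 2 ≤ r) (α : ℝ)
    (hα0 : 0 < α) (hα1 : α < 1) (n : ℕ) (hn : 1 ≤ n) (x : DL q r) (hx : x ∈ Sdl q r n) :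
    (∀ y : DL q r, y.val.1 ∈ S1leaves q n → y.val.2 = rootAt r (-(n : ℤ)) →
        FA (pDL q r α) (Sbd q r n) x y = FA (p1 q α) (S1bd q n) x.val.1 y.val.1) ∧
    (∀ y : DL q r, y.val.1 = rootAt q (-(n : ℤ)) → y.val.2 ∈ S1leaves r n →
        FA (pDL q r α) (Sbd q r n) x y = FA (p2 r α) (S1bd r n) x.val.2 y.val.2) := by
  haveI : NeZero q := ⟨by omega⟩
  haveI : NeZero r := ⟨by omega⟩
  constructor
  · intro y hy1 hy2
    exact tsum_congr fun m => key1 hy1 hy2 m x hx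
  · intro y hy1 hy2
    exact tsum_congr fun m => key2 hy1 hy2 m x hx

end LampDL
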